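/- Let \ell > 0 and b \ne 0 be integers satisfying \ell^2 + 4b \ge 0, and define the sequence s by s_0 = 0, s_1 = 1, s_j = \ell s_{j-1} + b s_{j-2} for j \ge 2. Set r = \gcd(\ell, b), t = \gcd(\ell^2/r, b/r), and \sigma = r/t. Then for every n \ge 1, \gcd(s_{n+1}, s_n) divides t^n \sigma^{\lfloor n/2 \rfloor}. -/

import Mathlib

private lemma dvdE (p : ℕ) (z : ℤ) (k : ℕ) : ((p:ℤ)^k ∣ z) ↔ p^k ∣ z.natAbs := by
  rw [← Int.natAbs_dvd_natAbs]; simp [Int.natAbs_pow]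

private lemma cassini (ℓ b : ℤ) (s : ℕ → ℤ) (hs0 : s 0 = 0) (hs1 : s 1 = 1)
    (h2 : ∀ j, s (j+2) = ℓ * s (j+1) + b * s j) :
    ∀ m, s (m+2) * s m - s (m+1) * s (m+1) = -(-b)^m := by
  intro m
  induction m with
  | zero => rw [hs0, hs1]; ring
  | succ m ih => linear_combination s (m+1) * h2 (m+1) - s (m+2) * h2 m - b * ih

private lemma sPos (ℓ b : ℤ) (s : ℕ → ℤ) (hℓ : 0 < ℓ) (hD : 0 ≤ ℓ ^ 2 + 4 * b)
    (hs0 : s 0 = 0) (hs1 : s 1 = 1)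
    (h2 : ∀ j, s (j+2) = ℓ * s (j+1) + b * s j) :
    ∀ n, 0 ≤ s n ∧ 1 ≤ s (n+1) ∧ ℓ * s n ≤ 2 * s (n+1) := by
  intro n
  induction n with
  | zero => rw [hs0, hs1]; refine ⟨le_refl _, le_refl _, by linarith⟩
  | succ n ih =>
    obtain ⟨h0, h1, h3⟩ := ih
    have hr := h2 n
    rcases le_or_gt 0 b with hbp | hbn
    · have hbs : 0 ≤ b * s n := mul_nonneg hbp h0
      refine ⟨by linarith, by nlinarith, by nlinarith⟩
    · have hmul : b * (2 * s (n+1)) ≤ b * (ℓ * s n) :=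
        mul_le_mul_of_nonpos_left h3 (le_of_lt hbn)
      have key : ℓ * (2 * s (n+2)) ≥ ℓ * (ℓ * s (n+1)) := by nlinarith
      have h4 : ℓ * s (n+1) ≤ 2 * s (n+2) := le_of_mul_le_mul_left (by linarith) hℓ
      have h5 : 1 ≤ s (n+2) := by nlinarith
      exact ⟨by linarith, h5, h4⟩

private lemma Ldvd (ℓ b : ℤ) (s : ℕ → ℤ) (p a c : ℕ) (hc : c ≤ 2*a)
    (hA : (p:ℤ)^a ∣ ℓ) (hB : (p:ℤ)^c ∣ b)
    (hs0 : s 0 = 0) (hs1 : s 1 = 1)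
    (h2 : ∀ j, s (j+2) = ℓ * s (j+1) + b * s j) :
    ∀ k, ((p:ℤ)^(k*c) ∣ s (2*k+1)) ∧ ((p:ℤ)^(a + k*c) ∣ s (2*k+2)) := by
  intro k
  induction k with
  | zero =>
    constructor
    · simp [hs1]
    · have e := h2 0
      rw [hs0, hs1] at e
      simp only [mul_one, mul_zero, add_zero] at e
      simpa [e] using hA
  | succ k ih =>
    obtain ⟨ih1, ih2⟩ := ih
    have e1 : s (2*(k+1)+1) = ℓ * s (2*k+2) + b * s (2*k+1) := by
      have := h2 (2*k+1)
      have i : 2*(k+1)+1 = (2*k+1)+2 := by ring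
      rw [i]; exact this
    have e2 : s (2*(k+1)+2) = ℓ * s (2*(k+1)+1) + b * s (2*k+2) := by
      have := h2 (2*k+2)
      have i : 2*(k+1)+2 = (2*k+2)+2 := by ring
      have i2 : 2*(k+1)+1 = (2*k+2)+1 := by ring
      rw [i, i2]; exact this
    have exp1 : (k+1)*c = k*c + c := by ring
    have d1 : (p:ℤ)^((k+1)*c) ∣ s (2*(k+1)+1) := by
      rw [e1]
      apply dvd_add
      · refine dvd_trans (pow_dvd_pow (p:ℤ) ?_) (by rw [pow_add]; exact mul_dvd_mul hA ih2)
        linarith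
      · refine dvd_trans (pow_dvd_pow (p:ℤ) ?_) (by rw [pow_add]; exact mul_dvd_mul hB ih1)
        linarith
    have d2 : (p:ℤ)^(a + (k+1)*c) ∣ s (2*(k+1)+2) := by
      rw [e2]
      apply dvd_add
      · refine dvd_trans (pow_dvd_pow (p:ℤ) ?_) (by rw [pow_add]; exact mul_dvd_mul hA d1)
        linarith
      · refine dvd_trans (pow_dvd_pow (p:ℤ) ?_) (by rw [pow_add]; exact mul_dvd_mul hB ih2)
        linarith
    exact ⟨d1, d2⟩

private lemma exactA (ℓ b : ℤ) (s : ℕ → ℤ) (p a c : ℕ) (hp : Prime (p:ℤ)) (hc : 2*a < c)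
    (hA : (p:ℤ)^a ∣ ℓ) (hA' : ¬ (p:ℤ)^(a+1) ∣ ℓ) (hB : (p:ℤ)^c ∣ b)
    (hs0 : s 0 = 0) (hs1 : s 1 = 1)
    (h2 : ∀ j, s (j+2) = ℓ * s (j+1) + b * s j) :
    ∀ n, ∃ u, s (n+1) = (p:ℤ)^(n*a) * u ∧ ¬ (p:ℤ) ∣ u := by
  obtain ⟨ℓ', hℓ'⟩ := hA
  obtain ⟨b', hb'⟩ := hB
  have hpl' : ¬ (p:ℤ) ∣ ℓ' := by
    intro ⟨w, hw⟩
    exact hA' ⟨w, by rw [hℓ', hw, pow_succ]; ring⟩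
  have key : ∀ n, (∃ u, s (n+1) = (p:ℤ)^(n*a) * u ∧ ¬ (p:ℤ) ∣ u) ∧
      (∃ u, s (n+2) = (p:ℤ)^((n+1)*a) * u ∧ ¬ (p:ℤ) ∣ u) := by
    intro n
    induction n with
    | zero =>
      constructor
      · exact ⟨1, by simp [hs1], hp.not_dvd_one⟩
      · refine ⟨ℓ', ?_, hpl'⟩
        have e := h2 0
        rw [hs0, hs1] at e
        simp only [mul_one, mul_zero, add_zero] at e
        rw [e, hℓ']; norm_num
    | succ n ih =>
      obtain ⟨⟨u, hu, hu'⟩, ⟨v, hv, hv'⟩⟩ := ih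
      refine ⟨⟨v, hv, hv'⟩, ?_⟩
      set w : ℤ := ℓ' * v + (p:ℤ)^(c - 2*a) * (b' * u) with hw
      refine ⟨w, ?_, ?_⟩
      · have e := h2 (n+1)
        have exp : c + n*a = ((n+1)+1)*a + (c - 2*a) := by
          have h1 : ((n+1)+1)*a = n*a + 2*a := by ring
          omega
        calc s (n+3) = ℓ * s (n+2) + b * s (n+1) := e
          _ = (p:ℤ)^a * ℓ' * ((p:ℤ)^((n+1)*a) * v) + (p:ℤ)^c * b' * ((p:ℤ)^(n*a) * u) := by
              rw [← hℓ', ← hb', ← hu, ← hv]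
          _ = (p:ℤ)^(a + (n+1)*a) * (ℓ' * v) + (p:ℤ)^(c + n*a) * (b' * u) := by
              rw [pow_add, pow_add]; ring
          _ = (p:ℤ)^(((n+1)+1)*a) * w := by
              rw [hw, exp]
              have h1 : a + (n+1)*a = ((n+1)+1)*a := by ring
              rw [← h1, pow_add, pow_add]
              ring
      · intro hdvd
        have h1 : (p:ℤ) ∣ (p:ℤ)^(c - 2*a) * (b' * u) := by
          apply dvd_mul_of_dvd_left
          exact dvd_pow_self (p:ℤ) (by omega)
        have h3 : (p:ℤ) ∣ ℓ' * v := (dvd_add_right h1).mp (by rwa [hw, add_comm] at hdvd)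
        rcases hp.dvd_mul.mp h3 with h | h
        · exact hpl' h
        · exact hv' h
  exact fun n => (key n).1

private lemma keyBound (ℓ b : ℤ) (s : ℕ → ℤ) (p a c n k : ℕ) (hp : p.Prime)
    (hn : 1 ≤ n)
    (hA : (p:ℤ)^a ∣ ℓ) (hA' : ¬ (p:ℤ)^(a+1) ∣ ℓ)
    (hB : (p:ℤ)^c ∣ b) (hB' : ¬ (p:ℤ)^(c+1) ∣ b)
    (hs0 : s 0 = 0) (hs1 : s 1 = 1)
    (h2 : ∀ j, s (j+2) = ℓ * s (j+1) + b * s j)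
    (hk1 : (p:ℤ)^k ∣ s n) (hk2 : (p:ℤ)^k ∣ s (n+1)) :
    k ≤ if c ≤ 2*a then n/2*c + n%2*(c - min a c) else n*a := by
  have hpI : Prime (p:ℤ) := Nat.prime_iff_prime_int.mp hp
  by_cases hcc : c ≤ 2*a
  · rw [if_pos hcc]
    set E := n/2*c + n%2*(c - min a c) with hE
    by_contra hgt
    push_neg at hgt
    have hE1 : (p:ℤ)^(E+1) ∣ s n := dvd_trans (pow_dvd_pow _ hgt) hk1
    have hE2 : (p:ℤ)^(E+1) ∣ s (n+1) := dvd_trans (pow_dvd_pow _ hgt) hk2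
    rcases eq_or_lt_of_le hn with h1 | h1
    · -- n = 1 : p^(E+1) ∣ s 1 = 1, impossible
      rw [← h1, hs1] at hE1
      have : (p:ℤ) ∣ 1 := dvd_trans (dvd_pow_self _ (Nat.succ_ne_zero E)) hE1
      exact hpI.not_dvd_one this
    · -- n ≥ 2
      obtain ⟨m, rfl⟩ : ∃ m, n = m + 2 := ⟨n - 2, by omega⟩
      set X := (m+1)*c + 1 with hX
      have hρ : min a c ≤ a := min_le_left a c
      have hρc : min a c ≤ c := min_le_right a c
      -- lower bound for s (m+1)
      have hL : ∃ L, ((p:ℤ)^L ∣ s (m+1)) ∧ X ≤ (E+1) + L ∧ X ≤ 2*(E+1) := by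
        rcases Nat.even_or_odd m with ⟨j, hj⟩ | ⟨j, hj⟩
        · -- m = 2j, n = 2j+2, s(m+1) = s(2j+1)
          refine ⟨j*c, ?_, ?_, ?_⟩
          · have := (Ldvd ℓ b s p a c hcc hA hB hs0 hs1 h2 j).1
            rwa [show 2*j+1 = m+1 by omega] at this
          · have e1 : E = (j+1)*c := by
              rw [hE, show (m+2)/2 = j+1 by omega, show (m+2)%2 = 0 by omega]
              ring
            have e2 : (m+1)*c = 2*(j*c) + c := by rw [hj]; ring
            have e3 : (j+1)*c = j*c + c := by ring
            rw [hX, e1]; linarith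
          · have e1 : E = (j+1)*c := by
              rw [hE, show (m+2)/2 = j+1 by omega, show (m+2)%2 = 0 by omega]
              ring
            have e2 : (m+1)*c = 2*(j*c) + c := by rw [hj]; ring
            have e3 : (j+1)*c = j*c + c := by ring
            rw [hX, e1]; linarith
        · -- m = 2j+1, n = 2j+3, s(m+1) = s(2j+2)
          refine ⟨a + j*c, ?_, ?_, ?_⟩
          · have := (Ldvd ℓ b s p a c hcc hA hB hs0 hs1 h2 j).2
            rwa [show 2*j+2 = m+1 by omega] at this
          · have e1 : E = (j+1)*c + (c - min a c) := by
              rw [hE, show (m+2)/2 = j+1 by omega, show (m+2)%2 = 1 by omega]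
              ring
            have e2 : (m+1)*c = 2*(j*c) + 2*c := by rw [hj]; ring
            have e3 : (j+1)*c = j*c + c := by ring
            have e4 : c - min a c + min a c = c := Nat.sub_add_cancel hρc
            rw [hX, e1]; linarith
          · have e1 : E = (j+1)*c + (c - min a c) := by
              rw [hE, show (m+2)/2 = j+1 by omega, show (m+2)%2 = 1 by omega]
              ring
            have e2 : (m+1)*c = 2*(j*c) + 2*c := by rw [hj]; ring
            have e3 : (j+1)*c = j*c + c := by ring
            have e4 : c - min a c + min a c = c := Nat.sub_add_cancel hρc
            rw [hX, e1]; linarith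
      obtain ⟨L, hLd, hX1, hX2⟩ := hL
      have dS : (p:ℤ)^X ∣ s (m+2+1) * s (m+1) :=
        dvd_trans (pow_dvd_pow _ hX1) (by rw [pow_add]; exact mul_dvd_mul hE2 hLd)
      have dQ : (p:ℤ)^X ∣ s (m+2) * s (m+2) := by
        refine dvd_trans (pow_dvd_pow _ hX2) ?_
        rw [two_mul, pow_add]; exact mul_dvd_mul hE1 hE1
      have dC : (p:ℤ)^X ∣ -(-b)^(m+1) := by
        have hcas := cassini ℓ b s hs0 hs1 h2 (m+1)
        rw [← hcas]
        exact dvd_sub dS dQ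
      -- extract contradiction in ℕ
      have hBn : p^c ∣ b.natAbs := (dvdE p b c).mp hB
      have hBn' : ¬ p^(c+1) ∣ b.natAbs := fun h => hB' ((dvdE p b (c+1)).mpr h)
      obtain ⟨B', hB'eq⟩ := hBn
      have hpB' : ¬ p ∣ B' := by
        intro ⟨w, hw⟩
        exact hBn' ⟨w, by rw [hB'eq, hw, pow_succ]; ring⟩
      have dN : p^X ∣ b.natAbs^(m+1) := by
        have := (dvdE p (-(-b)^(m+1)) X).mp dC
        simpa [Int.natAbs_neg, Int.natAbs_pow] using this
      rw [hB'eq, mul_pow, ← pow_mul, hX, show (m+1)*c + 1 = c*(m+1) + 1 by ring,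
        pow_succ] at dN
      have hcancel : p ∣ B'^(m+1) := by
        have h0 : 0 < p^(c*(m+1)) := pow_pos hp.pos _
        exact (Nat.mul_dvd_mul_iff_left h0).mp dN
      exact hpB' (hp.prime.dvd_of_dvd_pow hcancel)
  · rw [if_neg hcc]
    push_neg at hcc
    obtain ⟨m, rfl⟩ : ∃ m, n = m + 1 := ⟨n - 1, by omega⟩
    obtain ⟨u, hu, hu'⟩ := exactA ℓ b s p a c hpI hcc hA hA' hB hs0 hs1 h2 m
    have hkm : k ≤ m*a := by
      by_contra hgt
      push_neg at hgt
      have h1 : (p:ℤ)^(m*a+1) ∣ (p:ℤ)^(m*a) * u := dvd_trans (pow_dvd_pow _ hgt) (hu ▸ hk1)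
      rw [pow_succ] at h1
      have := (mul_dvd_mul_iff_left (a := (p:ℤ)^(m*a)) (pow_ne_zero _ (by exact_mod_cast hp.ne_zero))).mp h1
      exact hu' this
    have : m*a ≤ (m+1)*a := by nlinarith
    omega

/-- With `ℓ > 0`, `b ≠ 0`, `ℓ² + 4b ≥ 0`, `s` as usual,
`r = gcd(ℓ, b)`, `t = gcd(ℓ²/r, b/r)`, `σ = r/t`: for every `n ≥ 1`,
`gcd(s_{n+1}, sₙ)` divides `tⁿ σ^⌊n/2⌋`. -/
theorem stmt12 (ℓ b : ℤ) (hℓ : 0 < ℓ) (hb : b ≠ 0) (hD : 0 ≤ ℓ ^ 2 + 4 * b)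
    (s : ℕ → ℤ) (hs0 : s 0 = 0) (hs1 : s 1 = 1)
    (hrec : ∀ j, 2 ≤ j → s j = ℓ * s (j - 1) + b * s (j - 2))
    (r t σ : ℤ) (hr : r = Int.gcd ℓ b) (ht : t = Int.gcd (ℓ ^ 2 / r) (b / r))
    (hσ : σ = r / t) :
    ∀ n, 1 ≤ n → (Int.gcd (s (n + 1)) (s n) : ℤ) ∣ t ^ n * σ ^ (n / 2) := by
  have h2 : ∀ j, s (j+2) = ℓ * s (j+1) + b * s j := fun j => hrec (j+2) (by omega)
  -- natAbs versions
  set A := ℓ.natAbs with hA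
  set B := b.natAbs with hB
  have hA0 : A ≠ 0 := Int.natAbs_ne_zero.mpr (ne_of_gt hℓ)
  have hB0 : B ≠ 0 := Int.natAbs_ne_zero.mpr hb
  have hAcast : (A:ℤ) = ℓ := Int.natAbs_of_nonneg hℓ.le
  set R := Nat.gcd A B with hRdef
  have hRpos : 0 < R := Nat.gcd_pos_of_pos_left _ (Nat.pos_of_ne_zero hA0)
  have hrR : r = (R:ℤ) := by rw [hr]; rfl
  have hrne : r ≠ 0 := by rw [hrR]; exact_mod_cast hRpos.ne'
  have hRdvdA2 : R ∣ A^2 := (Nat.gcd_dvd_left A B).trans (dvd_pow_self A two_ne_zero)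
  have hRdvdB : R ∣ B := Nat.gcd_dvd_right A B
  have hq1 : ℓ^2 / r = ((A^2 / R : ℕ) : ℤ) := by
    rw [hrR, ← hAcast, Int.natCast_div]; push_cast; ring_nf
  obtain ⟨qb, hqb⟩ : r ∣ b := hr ▸ Int.gcd_dvd_right _ _
  have hbr : b / r = qb := by rw [hqb]; exact Int.mul_ediv_cancel_left _ hrne
  have hqbn : qb.natAbs = B / R := by
    have h1 : B = R * qb.natAbs := by
      rw [hB, hqb, Int.natAbs_mul, hrR]; simp
    rw [h1, Nat.mul_div_cancel_left _ hRpos]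
  set tN := Nat.gcd (A^2/R) (B/R) with htNdef
  have htT : t = (tN:ℤ) := by
    rw [ht, hq1, hbr, htNdef, Int.gcd]
    have hnorm : ((A:ℤ)^2 / (R:ℤ)).natAbs = A^2 / R := by
      rw [show ((A:ℤ)^2) = ((A^2:ℕ):ℤ) from by push_cast; ring]
      rw [← Int.natCast_div]
      exact Int.natAbs_natCast _
    simp [Int.natAbs_natCast, hqbn, hnorm]
  have hA2Rpos : 0 < A^2/R :=
    Nat.div_pos (Nat.le_of_dvd (Nat.pos_of_ne_zero (pow_ne_zero 2 hA0)) hRdvdA2) hRpos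
  have hBRpos : 0 < B/R := Nat.div_pos (Nat.le_of_dvd (Nat.pos_of_ne_zero hB0) hRdvdB) hRpos
  have htNpos : 0 < tN := Nat.gcd_pos_of_pos_left _ hA2Rpos
  -- factorization facts
  have hvR : ∀ p, R.factorization p = min (A.factorization p) (B.factorization p) := by
    intro p
    rw [hRdef, Nat.factorization_gcd hA0 hB0]; rfl
  have hvT : ∀ p, tN.factorization p =
      min (2 * A.factorization p - min (A.factorization p) (B.factorization p))
          (B.factorization p - min (A.factorization p) (B.factorization p)) := by
    intro p
    rw [htNdef, Nat.factorization_gcd hA2Rpos.ne' hBRpos.ne']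
    show min ((A^2/R).factorization p) ((B/R).factorization p) = _
    rw [Nat.factorization_div hRdvdA2, Nat.factorization_div hRdvdB]
    show min ((A^2).factorization p - R.factorization p) (B.factorization p - R.factorization p) = _
    rw [Nat.factorization_pow, hvR p]
    show min (2 * A.factorization p - _) _ = _
    rfl
  have htNdvdR : tN ∣ R := by
    rw [← Nat.factorization_le_iff_dvd htNpos.ne' hRpos.ne']
    intro p
    rw [hvT p, hvR p]
    omega
  set σN := R / tN with hσNdef
  have hσT : σ = (σN:ℤ) := by rw [hσ, hrR, htT, hσNdef, Int.natCast_div]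
  have hσNpos : 0 < σN := Nat.div_pos (Nat.le_of_dvd hRpos htNdvdR) htNpos
  have hvS : ∀ p, σN.factorization p = R.factorization p - tN.factorization p := by
    intro p
    rw [hσNdef, Nat.factorization_div htNdvdR]; rfl
  -- positivity
  have hpos := sPos ℓ b s hℓ hD hs0 hs1 h2
  intro n hn
  rw [htT, hσT]
  obtain ⟨n', rfl⟩ : ∃ m, n = m + 1 := ⟨n - 1, by omega⟩
  have hsn : 1 ≤ s (n'+1) := (hpos n').2.1
  have hsn1 : 1 ≤ s (n'+1+1) := (hpos (n'+1)).2.1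
  set G := Int.gcd (s (n'+1+1)) (s (n'+1)) with hGdef
  have hGpos : 0 < G :=
    Nat.gcd_pos_of_pos_left _ (Int.natAbs_pos.mpr (by linarith : s (n'+1+1) ≠ 0))
  push_cast
  rw [show ((G:ℤ)) ∣ (tN:ℤ)^(n'+1) * (σN:ℤ)^((n'+1)/2) ↔
      (G:ℤ) ∣ ((tN^(n'+1) * σN^((n'+1)/2) : ℕ) : ℤ) by push_cast; rfl]
  rw [Int.natCast_dvd_natCast]
  have hRHS0 : tN^(n'+1) * σN^((n'+1)/2) ≠ 0 :=
    Nat.mul_ne_zero (pow_ne_zero _ htNpos.ne') (pow_ne_zero _ hσNpos.ne')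
  rw [← Nat.factorization_le_iff_dvd hGpos.ne' hRHS0]
  intro p
  by_cases hp : p.Prime
  swap
  · rw [Nat.factorization_eq_zero_of_not_prime _ hp]; exact Nat.zero_le _
  -- main per-prime bound
  set n := n' + 1 with hn'
  set a := A.factorization p with ha
  set c := B.factorization p with hc
  set k := G.factorization p with hk
  have hkdvd : p^k ∣ G := Nat.ordProj_dvd G p
  have hk1 : (p:ℤ)^k ∣ s n := (dvdE p _ k).mpr (hkdvd.trans (Nat.gcd_dvd_right _ _))
  have hk2 : (p:ℤ)^k ∣ s (n+1) := (dvdE p _ k).mpr (hkdvd.trans (Nat.gcd_dvd_left _ _))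
  have hAd : (p:ℤ)^a ∣ ℓ := (dvdE p ℓ a).mpr (Nat.ordProj_dvd A p)
  have hAd' : ¬ (p:ℤ)^(a+1) ∣ ℓ := fun h =>
    Nat.pow_succ_factorization_not_dvd hA0 hp ((dvdE p ℓ (a+1)).mp h)
  have hBd : (p:ℤ)^c ∣ b := (dvdE p b c).mpr (Nat.ordProj_dvd B p)
  have hBd' : ¬ (p:ℤ)^(c+1) ∣ b := fun h =>
    Nat.pow_succ_factorization_not_dvd hB0 hp ((dvdE p b (c+1)).mp h)
  have hkey := keyBound ℓ b s p a c n k hp (by omega) hAd hAd' hBd hBd' hs0 hs1 h2 hk1 hk2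
  -- RHS factorization
  have hRHSp : (tN^n * σN^(n/2)).factorization p =
      n * tN.factorization p + (n/2) * σN.factorization p := by
    rw [Nat.factorization_mul (pow_ne_zero _ htNpos.ne') (pow_ne_zero _ hσNpos.ne')]
    rw [Nat.factorization_pow, Nat.factorization_pow]
    rfl
  rw [hRHSp]
  set τ := tN.factorization p with hτdef
  set ς := σN.factorization p with hςdef
  have hτval : τ = min (2*a - min a c) (c - min a c) := hvT p
  have hςval : ς = min a c - τ := by rw [hςdef, hvS p, hvR p]
  by_cases hcc : c ≤ 2*a
  · rw [if_pos hcc] at hkey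
    have hτ2 : τ = c - min a c := by omega
    have h2τς : 2*τ + ς = c := by omega
    have hn2 : n = 2*(n/2) + n%2 := (Nat.div_add_mod n 2).symm
    have hkey2 : n/2*c + n%2*τ = n*τ + n/2*ς := by
      calc n/2*c + n%2*τ = n/2*(2*τ+ς) + n%2*τ := by rw [h2τς]
        _ = (2*(n/2)+n%2)*τ + n/2*ς := by ring
        _ = n*τ + n/2*ς := by rw [← hn2]
    calc k ≤ n/2*c + n%2*(c - min a c) := hkey
      _ = n/2*c + n%2*τ := by rw [hτ2]
      _ = n*τ + n/2*ς := hkey2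
  · rw [if_neg hcc] at hkey
    have hτ2 : τ = a := by omega
    have hς2 : ς = 0 := by omega
    rw [hτ2, hς2]
    simpa using hkey
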